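/- Let X be a uniformly convex real Banach space and let C be a nonempty convex subset of X that is compact in the weak topology of X. Let S = {T₁, T₂, …, T_m} be a finite family of pairwise commuting mappings T_i : C → C, each satisfying condition B_{γ,μ} on C for γ ∈ [0,1] and μ ∈ [0,1/2] with 2μ ≤ γ. Then the fixed point sets F(T_i) = {x ∈ C : T_i x = x} have nonempty intersection: ⋂_{i=1}^{m} F(T_i) ≠ ∅. -/

import Mathlib

open Filter Topology Set

set_option linter.unusedSectionVars false
set_option maxHeartbeats 1000000

section CondBHelpers
variable {X : Type*} [NormedAddCommGroup X] [NormedSpace ℝ X]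

lemma condB_qne' {K : Set X} {γ μ : ℝ} {T : X → X}
    (hμ0 : 0 ≤ μ) (hμ1 : μ ≤ 1/2) (hμγ : 2*μ ≤ γ)
    (hB : ∀ x ∈ K, ∀ y ∈ K, γ*‖x - T x‖ ≤ ‖x-y‖ + μ*‖y - T y‖ →
      ‖T x - T y‖ ≤ (1-γ)*‖x-y‖ + μ*(‖x - T y‖ + ‖y - T x‖))
    {z : X} (hz : z ∈ K) (hfz : T z = z) {y : X} (hy : y ∈ K) :
    ‖z - T y‖ ≤ ‖z - y‖ := by
  have h := hB z hz y hy (by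
    rw [hfz, sub_self, norm_zero, mul_zero]
    positivity)
  rw [hfz] at h
  have h1 : ‖y - z‖ = ‖z - y‖ := norm_sub_rev _ _
  have h1μ : (0:ℝ) < 1 - μ := by linarith
  have key : (1-μ)*‖z - T y‖ ≤ (1-μ)*‖z - y‖ := by
    nlinarith [norm_nonneg (z - y)]
  exact le_of_mul_le_mul_left key h1μ

/-- The fixed point set inside `K` is convex (strict convexity of the space). -/
lemma condB_fix_convex [StrictConvexSpace ℝ X] {K : Set X} {γ μ : ℝ} {T : X → X}
    (hKc : Convex ℝ K)
    (hμ0 : 0 ≤ μ) (hμ1 : μ ≤ 1/2) (hμγ : 2*μ ≤ γ)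
    (hB : ∀ x ∈ K, ∀ y ∈ K, γ*‖x - T x‖ ≤ ‖x-y‖ + μ*‖y - T y‖ →
      ‖T x - T y‖ ≤ (1-γ)*‖x-y‖ + μ*(‖x - T y‖ + ‖y - T x‖)) :
    Convex ℝ {x ∈ K | T x = x} := by
  rintro z₁ ⟨hz₁K, hz₁⟩ z₂ ⟨hz₂K, hz₂⟩ a b ha hb hab
  set w := a • z₁ + b • z₂ with hw
  have hwK : w ∈ K := hKc hz₁K hz₂K ha hb hab
  refine ⟨hwK, ?_⟩
  rcases eq_or_lt_of_le ha with ha0 | ha0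
  · have : w = z₂ := by rw [hw, ← ha0]; simp [show b = 1 by linarith]
    rw [this]; exact hz₂
  rcases eq_or_lt_of_le hb with hb0 | hb0
  · have : w = z₁ := by rw [hw, ← hb0]; simp [show a = 1 by linarith]
    rw [this]; exact hz₁
  by_cases hzz : z₁ = z₂
  · have : w = z₁ := by rw [hw, hzz, ← add_smul, hab, one_smul]
    rw [this, hzz]; exact hz₂
  -- distances
  have hd1 : ‖z₁ - T w‖ ≤ b * ‖z₁ - z₂‖ := by
    have := condB_qne' hμ0 hμ1 hμγ hB hz₁K hz₁ hwK
    have hz1w : z₁ - w = b • (z₁ - z₂) := by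
      rw [hw]; rw [show (a:ℝ) = 1 - b by linarith]; module
    calc ‖z₁ - T w‖ ≤ ‖z₁ - w‖ := this
      _ = b * ‖z₁ - z₂‖ := by rw [hz1w, norm_smul, Real.norm_eq_abs, abs_of_nonneg hb]
  have hd2 : ‖z₂ - T w‖ ≤ a * ‖z₁ - z₂‖ := by
    have := condB_qne' hμ0 hμ1 hμγ hB hz₂K hz₂ hwK
    have hz2w : z₂ - w = a • (z₂ - z₁) := by
      rw [hw]; rw [show (b:ℝ) = 1 - a by linarith]; module
    calc ‖z₂ - T w‖ ≤ ‖z₂ - w‖ := this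
      _ = a * ‖z₁ - z₂‖ := by
          rw [hz2w, norm_smul, Real.norm_eq_abs, abs_of_nonneg ha, norm_sub_rev]
  have hc0 : (0:ℝ) < ‖z₁ - z₂‖ := by
    rw [norm_pos_iff, sub_ne_zero]; exact hzz
  have htri : ‖z₁ - z₂‖ ≤ ‖z₁ - T w‖ + ‖T w - z₂‖ := by
    have e : (z₁ - T w) + (T w - z₂) = z₁ - z₂ := by abel
    calc ‖z₁ - z₂‖ = ‖(z₁ - T w) + (T w - z₂)‖ := by rw [e]
      _ ≤ _ := norm_add_le _ _
  have hd2' : ‖T w - z₂‖ ≤ a * ‖z₁ - z₂‖ := by rw [norm_sub_rev]; exact hd2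
  have he1 : ‖z₁ - T w‖ = b * ‖z₁ - z₂‖ := by nlinarith
  have he2 : ‖T w - z₂‖ = a * ‖z₁ - z₂‖ := by nlinarith
  have hkey : ‖(z₁ - T w) + (T w - z₂)‖ = ‖z₁ - T w‖ + ‖T w - z₂‖ := by
    have e : (z₁ - T w) + (T w - z₂) = z₁ - z₂ := by abel
    rw [e, he1, he2]; nlinarith [hab]
  have hsr : SameRay ℝ (z₁ - T w) (T w - z₂) := sameRay_iff_norm_add.mpr hkey
  have hx0 : z₁ - T w ≠ 0 := by
    rw [← norm_pos_iff, he1]; positivity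
  have hy0 : T w - z₂ ≠ 0 := by
    rw [← norm_pos_iff, he2]; positivity
  obtain ⟨r, s, hr, hs, hre⟩ := hsr.exists_pos hx0 hy0
  have hnorm : r * (b * ‖z₁ - z₂‖) = s * (a * ‖z₁ - z₂‖) := by
    have := congrArg norm hre
    rwa [norm_smul, norm_smul, Real.norm_eq_abs, Real.norm_eq_abs,
      abs_of_pos hr, abs_of_pos hs, he1, he2] at this
  have hrb : r * b = s * a := by
    have h5 : (r*b) * ‖z₁ - z₂‖ = (s*a) * ‖z₁ - z₂‖ := by
      rw [mul_assoc, mul_assoc]; exact hnorm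
    exact mul_right_cancel₀ (ne_of_gt hc0) h5
  have hrs : (0:ℝ) < r + s := by linarith
  have hTw : (r + s) • T w = r • z₁ + s • z₂ := by
    have h2 : r • (z₁ - T w) = s • (T w - z₂) := hre
    rw [smul_sub, smul_sub] at h2
    rw [add_smul]
    have := sub_eq_sub_iff_add_eq_add.mp h2
    -- r•z₁ - r•Tw = s•Tw - s•z₂  ⇒  r•z₁ + s•z₂ = r•Tw + s•Tw
    have h3 : r • z₁ + s • z₂ = r • T w + s • T w := by
      have := h2
      apply eq_of_sub_eq_zero
      rw [← sub_eq_zero] at this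
      rw [← this]; abel
    rw [h3]
  have hra : r = a * (r + s) := by nlinarith
  have hsb : s = b * (r + s) := by nlinarith
  have : T w = a • z₁ + b • z₂ := by
    have h4 : (r + s) • T w = (r + s) • (a • z₁ + b • z₂) := by
      rw [hTw, smul_add, smul_smul, smul_smul]
      rw [show (r+s) * a = r by linarith [hra], show (r+s) * b = s by linarith [hsb]]
    exact smul_right_injective X (ne_of_gt hrs) h4
  rw [this]


/-- The fixed point set inside `K` is closed. -/
lemma condB_fix_closed {K : Set X} {γ μ : ℝ} {T : X → X}
    (hK : IsClosed K)
    (hμ0 : 0 ≤ μ) (hμ1 : μ ≤ 1/2) (hμγ : 2*μ ≤ γ)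
    (hB : ∀ x ∈ K, ∀ y ∈ K, γ*‖x - T x‖ ≤ ‖x-y‖ + μ*‖y - T y‖ →
      ‖T x - T y‖ ≤ (1-γ)*‖x-y‖ + μ*(‖x - T y‖ + ‖y - T x‖)) :
    IsClosed {x ∈ K | T x = x} := by
  apply IsSeqClosed.isClosed
  intro u p hu hup
  have hpK : p ∈ K := hK.mem_of_tendsto hup (Eventually.of_forall fun n => (hu n).1)
  refine ⟨hpK, ?_⟩
  have h1 : ∀ n, ‖u n - T p‖ ≤ ‖u n - p‖ :=
    fun n => condB_qne' hμ0 hμ1 hμγ hB (hu n).1 (hu n).2 hpK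
  have h2 : Tendsto (fun n => ‖u n - p‖) atTop (𝓝 0) := by
    have := (hup.sub (tendsto_const_nhds (x := p))).norm
    simpa using this
  have h3 : Tendsto (fun n => ‖u n - T p‖) atTop (𝓝 ‖p - T p‖) := by
    have := (hup.sub (tendsto_const_nhds (x := T p))).norm
    simpa using this
  have h4 : ‖p - T p‖ ≤ 0 := le_of_tendsto_of_tendsto h3 h2 (Eventually.of_forall h1)
  have h5 : p - T p = 0 := norm_le_zero_iff.mp h4
  exact (sub_eq_zero.mp h5).symm

lemma pairing_inj : Function.Injective ((topDualPairing ℝ X).flip) := by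
  intro x y h
  apply (NormedSpace.eq_iff_forall_dual_eq ℝ).mpr
  intro g
  have := LinearMap.congr_fun h g
  simpa [topDualPairing] using this

lemma weakSpace_t2 : T2Space (WeakSpace ℝ X) :=
  (WeakBilin.isEmbedding (pairing_inj (X := X))).t2Space

lemma weakCompact_isClosed {K : Set X} (hK : IsCompact (toWeakSpace ℝ X '' K)) :
    IsClosed K := by
  have : T2Space (WeakSpace ℝ X) := weakSpace_t2
  have h1 : IsClosed (toWeakSpace ℝ X '' K) := hK.isClosed
  have h2 : K = toWeakSpaceCLM ℝ X ⁻¹' (toWeakSpace ℝ X '' K) := by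
    ext x
    constructor
    · intro hx; exact ⟨x, hx, rfl⟩
    · rintro ⟨y, hy, hxy⟩
      have : y = x := (toWeakSpace ℝ X).injective hxy
      rwa [← this]
  rw [h2]
  exact h1.preimage (toWeakSpaceCLM ℝ X).continuous

lemma convex_isClosed_image_weak {s : Set X} (h1 : Convex ℝ s) (h2 : IsClosed s) :
    IsClosed (toWeakSpace ℝ X '' s) := by
  have := h1.toWeakSpace_closure (𝕜 := ℝ)
  rw [h2.closure_eq] at this
  rw [this]
  exact isClosed_closure

lemma weakCompact_subset {K F : Set X} (hK : IsCompact (toWeakSpace ℝ X '' K))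
    (hFK : F ⊆ K) (hFc : Convex ℝ F) (hFcl : IsClosed F) :
    IsCompact (toWeakSpace ℝ X '' F) :=
  hK.of_isClosed_subset (convex_isClosed_image_weak hFc hFcl) (Set.image_mono hFK)

lemma weakCompact_bounded [CompleteSpace X] {K : Set X}
    (hK : IsCompact (toWeakSpace ℝ X '' K)) :
    ∃ M : ℝ, 0 ≤ M ∧ ∀ p ∈ K, ∀ q ∈ K, ‖p - q‖ ≤ M := by
  have hpt : ∀ f : StrongDual ℝ X, ∃ Cf : ℝ, ∀ x : K, ‖f (x : X)‖ ≤ Cf := by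
    intro f
    have hc : Continuous fun x : WeakSpace ℝ X => ((topDualPairing ℝ X).flip) x f :=
      WeakBilin.eval_continuous _ f
    have himg : IsCompact ((fun x : WeakSpace ℝ X => ((topDualPairing ℝ X).flip) x f) ''
        (toWeakSpace ℝ X '' K)) := hK.image hc
    obtain ⟨Cf, hCf⟩ := (isBounded_iff_forall_norm_le).mp himg.isBounded
    refine ⟨Cf, fun x => ?_⟩
    exact hCf _ ⟨toWeakSpace ℝ X x, ⟨x, x.2, rfl⟩, rfl⟩
  set g : K → StrongDual ℝ (StrongDual ℝ X) :=
    fun x => NormedSpace.inclusionInDoubleDual ℝ X x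
  have hbdd : ∀ f : StrongDual ℝ X, ∃ Cf, ∀ i : K, ‖g i f‖ ≤ Cf := by
    intro f
    obtain ⟨Cf, hCf⟩ := hpt f
    exact ⟨Cf, fun i => by simpa [g, NormedSpace.inclusionInDoubleDual] using hCf i⟩
  obtain ⟨C', hC'⟩ := banach_steinhaus hbdd
  have hnorm : ∀ x : K, ‖(x : X)‖ ≤ C' := by
    intro x
    have := hC' x
    rwa [show ‖g x‖ = ‖(x : X)‖ from
      (NormedSpace.inclusionInDoubleDualLi ℝ (E := X)).norm_map (x : X)] at this
  refine ⟨max (C' + C') 0, le_max_right _ _, ?_⟩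
  intro p hp q hq
  calc ‖p - q‖ ≤ ‖p‖ + ‖q‖ := norm_sub_le _ _
    _ ≤ C' + C' := add_le_add (hnorm ⟨p, hp⟩) (hnorm ⟨q, hq⟩)
    _ ≤ _ := le_max_left _ _


/-- approximate fixed points for a nonexpansive map on a bounded closed convex set -/
lemma nonexpansive_afps [CompleteSpace X] {K : Set X}
    (hKconv : Convex ℝ K) (hKcl : IsClosed K) (hKne : K.Nonempty)
    {M : ℝ} (hM0 : 0 ≤ M) (hM : ∀ p ∈ K, ∀ q ∈ K, ‖p - q‖ ≤ M)
    {T : X → X} (hT : Set.MapsTo T K K)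
    (hnon : ∀ x ∈ K, ∀ y ∈ K, ‖T x - T y‖ ≤ ‖x - y‖)
    {ε : ℝ} (hε : 0 < ε) : ∃ x ∈ K, ‖x - T x‖ ≤ ε := by
  classical
  obtain ⟨x0, hx0⟩ := hKne
  haveI : Nonempty K := ⟨⟨x0, hx0⟩⟩
  haveI : CompleteSpace K := hKcl.completeSpace_coe
  set s : ℝ := min (1/2) (ε/(M+1)) with hsdef
  have hs0 : 0 < s := lt_min (by norm_num) (by positivity)
  have hs1 : s < 1 := lt_of_le_of_lt (min_le_left _ _) (by norm_num)
  set t : ℝ := 1 - s with htdef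
  have ht0 : 0 < t := by simp only [htdef]; linarith
  have ht1 : t < 1 := by simp only [htdef]; linarith
  set f : K → K := fun p =>
    ⟨s • x0 + t • (T p), hKconv hx0 (hT p.2) hs0.le ht0.le (by simp [htdef])⟩ with hfdef
  have hlip : LipschitzWith ⟨t, ht0.le⟩ f := by
    apply LipschitzWith.of_dist_le_mul
    intro p q
    show dist (f p : X) (f q : X) ≤ t * dist (p : X) (q : X)
    rw [dist_eq_norm, dist_eq_norm]
    have e : (f p : X) - (f q : X) = t • (T p - T q) := by
      simp only [hfdef]; module
    rw [e, norm_smul, Real.norm_eq_abs, abs_of_pos ht0]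
    exact mul_le_mul_of_nonneg_left (hnon _ p.2 _ q.2) ht0.le
  have hcontr : ContractingWith ⟨t, ht0.le⟩ f := ⟨by exact_mod_cast ht1, hlip⟩
  set p := hcontr.fixedPoint f with hpdef
  have hp : f p = p := hcontr.fixedPoint_isFixedPt
  have hpX : (p : X) = s • x0 + t • (T (p : X)) := by
    conv_lhs => rw [← hp]
  have hpK : (p : X) ∈ K := p.2
  refine ⟨(p : X), hpK, ?_⟩
  have e : (p : X) - T (p : X) = s • (x0 - T (p : X)) := by
    rw [smul_sub]
    nth_rewrite 1 [hpX]
    rw [htdef]; module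
  rw [e, norm_smul, Real.norm_eq_abs, abs_of_pos hs0]
  have h1 : ‖x0 - T (p : X)‖ ≤ M := hM _ hx0 _ (hT hpK)
  have h2 : s ≤ ε/(M+1) := min_le_right _ _
  calc s * ‖x0 - T (p:X)‖ ≤ (ε/(M+1)) * M := by
        apply mul_le_mul h2 h1 (norm_nonneg _) (by positivity)
    _ ≤ ε := by
        rw [div_mul_eq_mul_div, div_le_iff₀ (by linarith)]
        nlinarith


lemma orbit_afps [UniformConvexSpace X] {K : Set X}
    {M : ℝ} (hM0 : 0 ≤ M) (hM : ∀ p ∈ K, ∀ q ∈ K, ‖p - q‖ ≤ M)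
    {μ : ℝ} (hμpos : 0 < μ) (hμ1 : μ ≤ 1/2)
    {T : X → X} (hT : Set.MapsTo T K K)
    (hB : ∀ x ∈ K, ∀ y ∈ K, (2*μ)*‖x - T x‖ ≤ ‖x-y‖ + μ*‖y - T y‖ →
      ‖T x - T y‖ ≤ (1-2*μ)*‖x-y‖ + μ*(‖x - T y‖ + ‖y - T x‖))
    {x0 : X} (hx0 : x0 ∈ K) :
    ∃ x : ℕ → X, (∀ n, x n ∈ K) ∧ Tendsto (fun n => ‖x n - T (x n)‖) atTop (𝓝 0) := by
  classical
  set x : ℕ → X := fun n => T^[n] x0 with hxdef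
  have hxK : ∀ n, x n ∈ K := fun n => hT.iterate n hx0
  have hsucc : ∀ n, x (n+1) = T (x n) := fun n => Function.iterate_succ_apply' T n x0
  set D : ℕ → ℝ := fun n => ‖x n - x (n+1)‖ with hDdef
  have hD0 : ∀ n, 0 ≤ D n := fun n => norm_nonneg _
  have h1μ : (0:ℝ) < 1 - μ := by linarith
  have key : ∀ n, D (n+1) ≤ (1-2*μ)*D n + μ*‖x n - x (n+2)‖ := by
    intro n
    have h := hB (x n) (hxK n) (x (n+1)) (hxK (n+1)) (by
      rw [← hsucc n, ← hsucc (n+1)]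
      have h1 : (0:ℝ) ≤ (1 - 2*μ)*D n := mul_nonneg (by linarith) (hD0 n)
      have h2 : (0:ℝ) ≤ μ * D (n+1) := mul_nonneg hμpos.le (hD0 (n+1))
      show (2*μ)*D n ≤ D n + μ * D (n+1)
      linarith)
    rw [← hsucc n, ← hsucc (n+1)] at h
    have e0 : x (n+1) - x (n+1) = 0 := sub_self _
    rw [e0, norm_zero, add_zero] at h
    show ‖x (n+1) - x (n+2)‖ ≤ _
    exact h
  have tri2 : ∀ n, ‖x n - x (n+2)‖ ≤ D n + D (n+1) := by
    intro n
    have e : x n - x (n+2) = (x n - x (n+1)) + (x (n+1) - x (n+2)) := by abel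
    rw [e]; exact norm_add_le _ _
  have anti : ∀ n, D (n+1) ≤ D n := by
    intro n
    have k1 := key n
    have k2 : μ*‖x n - x (n+2)‖ ≤ μ*(D n + D (n+1)) :=
      mul_le_mul_of_nonneg_left (tri2 n) hμpos.le
    have key2 : (1-μ)*D (n+1) ≤ (1-μ)*D n := by nlinarith
    exact le_of_mul_le_mul_left key2 h1μ
  have hanti : Antitone D := antitone_nat_of_succ_le anti
  have hbdd : BddBelow (Set.range D) := ⟨0, by rintro - ⟨n, rfl⟩; exact hD0 n⟩
  set L := ⨅ n, D n with hLdef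
  have hL : Tendsto D atTop (𝓝 L) := tendsto_atTop_ciInf hanti hbdd
  have hLle : ∀ n, L ≤ D n := fun n => ciInf_le hbdd n
  have hL0 : 0 ≤ L := le_ciInf fun n => hD0 n
  have hLz : L = 0 := by
    by_contra hLne
    have hLpos : 0 < L := hL0.lt_of_ne (Ne.symm hLne)
    set k : ℕ := ⌈(M+1)/L⌉₊ with hkdef
    have hkL : M + 1 ≤ (k:ℝ) * L := by
      have h1 : (M+1)/L ≤ (k:ℝ) := Nat.le_ceil _
      calc M + 1 = ((M+1)/L)*L := by field_simp
        _ ≤ (k:ℝ)*L := mul_le_mul_of_nonneg_right h1 hLpos.le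
    have hk0 : (0:ℝ) ≤ (k:ℝ) := Nat.cast_nonneg _
    set θ : ℝ := 1/(2*(k:ℝ)^2+2) with hθdef
    have hθpos : 0 < θ := by positivity
    have hk2θ : (k:ℝ)*((k:ℝ)*θ) ≤ 1/2 := by
      rw [hθdef]
      rw [show (k:ℝ)*((k:ℝ)*(1/(2*(k:ℝ)^2+2))) = (k:ℝ)^2/(2*(k:ℝ)^2+2) by
        field_simp]
      rw [div_le_iff₀ (by positivity)]
      nlinarith
    obtain ⟨δ, hδ, hUC⟩ := exists_forall_closed_ball_dist_add_le_two_sub X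
      (show 0 < θ/(L+1) by positivity)
    set ε := min 1 (L*δ*μ/(2*(2*μ+1))) with hεdef
    have hεpos : 0 < ε := lt_min one_pos (by positivity)
    have hε1 : ε ≤ 1 := min_le_left _ _
    have hε2 : ε ≤ L*δ*μ/(2*(2*μ+1)) := min_le_right _ _
    have hε2' : ε*(2*(2*μ+1)) ≤ L*δ*μ := by
      rw [← le_div_iff₀ (by positivity)]; exact hε2
    obtain ⟨N, hN⟩ := eventually_atTop.mp (hL.eventually_lt_const
      (show L < L + ε by linarith))
    set u : ℕ → X := fun n => x (n+1) - x n with hudef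
    have hun : ∀ n, ‖u n‖ = D n := fun n => norm_sub_rev _ _
    set R := L + ε with hRdef
    have hRpos : 0 < R := by simp only [hRdef]; linarith
    have hRL1 : R ≤ L + 1 := by simp only [hRdef]; linarith
    have hstep : ∀ n, N ≤ n → ‖u (n+1) - u n‖ ≤ θ := by
      intro n hn
      by_contra hcon
      push_neg at hcon
      have hDn : D n < R := hN n hn
      have hDn1 : D (n+1) < R := hN (n+1) (le_trans hn (Nat.le_succ n))
      have hcomb0 : μ*(2*L) - ε ≤ μ*‖x n - x (n+2)‖ := by
        nlinarith [key n, hLle (n+1), hμpos, hεpos]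
      have hinv : (0:ℝ) < R⁻¹ := inv_pos.mpr hRpos
      have ha : ‖R⁻¹ • u n‖ ≤ 1 := by
        rw [norm_smul, Real.norm_eq_abs, abs_of_pos hinv, hun]
        calc R⁻¹ * D n ≤ R⁻¹ * R := mul_le_mul_of_nonneg_left hDn.le hinv.le
          _ = 1 := inv_mul_cancel₀ (ne_of_gt hRpos)
      have hb : ‖R⁻¹ • u (n+1)‖ ≤ 1 := by
        rw [norm_smul, Real.norm_eq_abs, abs_of_pos hinv, hun]
        calc R⁻¹ * D (n+1) ≤ R⁻¹ * R := mul_le_mul_of_nonneg_left hDn1.le hinv.le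
          _ = 1 := inv_mul_cancel₀ (ne_of_gt hRpos)
      have hab : θ/(L+1) ≤ ‖R⁻¹ • u n - R⁻¹ • u (n+1)‖ := by
        rw [← smul_sub, norm_smul, Real.norm_eq_abs, abs_of_pos hinv,
          inv_mul_eq_div, norm_sub_rev]
        exact div_le_div₀ (norm_nonneg _) hcon.le hRpos hRL1
      have h3 := hUC ha hb hab
      have hsumnorm : ‖u n + u (n+1)‖ ≤ R*(2-δ) := by
        rw [← smul_add, norm_smul, Real.norm_eq_abs, abs_of_pos hinv] at h3
        calc ‖u n + u (n+1)‖ = R * (R⁻¹ * ‖u n + u (n+1)‖) := by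
              rw [← mul_assoc, mul_inv_cancel₀ (ne_of_gt hRpos), one_mul]
          _ ≤ R * (2-δ) := mul_le_mul_of_nonneg_left h3 hRpos.le
      have he2 : ‖x n - x (n+2)‖ = ‖u n + u (n+1)‖ := by
        rw [show u n + u (n+1) = x (n+2) - x n by simp only [hudef]; abel,
          norm_sub_rev]
      have hSlow : μ*(2*L) - ε ≤ μ*(R*(2-δ)) := by
        calc μ*(2*L) - ε ≤ μ*‖x n - x (n+2)‖ := hcomb0
          _ = μ*‖u n + u (n+1)‖ := by rw [he2]
          _ ≤ μ*(R*(2-δ)) := mul_le_mul_of_nonneg_left hsumnorm hμpos.le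
      nlinarith [hε2', mul_pos hLpos hδ, mul_pos (mul_pos hμpos hLpos) hδ,
        mul_nonneg (mul_nonneg hμpos.le hεpos.le) hδ.le, hμpos, hεpos]
    have hchain : ∀ i : ℕ, ‖u (N+i) - u N‖ ≤ (i:ℝ)*θ := by
      intro i
      induction i with
      | zero => simp
      | succ j ih =>
        have e : u (N+(j+1)) - u N = (u (N+j+1) - u (N+j)) + (u (N+j) - u N) := by
          abel
        calc ‖u (N+(j+1)) - u N‖ ≤ ‖u (N+j+1) - u (N+j)‖ + ‖u (N+j) - u N‖ := by
              rw [e]; exact norm_add_le _ _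
          _ ≤ θ + (j:ℝ)*θ := add_le_add (hstep (N+j) (Nat.le_add_right _ _)) ih
          _ = ((j+1:ℕ):ℝ)*θ := by push_cast; ring
    have htele : ∑ i ∈ Finset.range k, u (N+i) = x (N+k) - x N := by
      have h := Finset.sum_range_sub (f := fun i => x (N+i)) k
      calc ∑ i ∈ Finset.range k, u (N+i)
          = ∑ i ∈ Finset.range k, (x (N+(i+1)) - x (N+i)) := rfl
        _ = x (N+k) - x (N+0) := h
        _ = x (N+k) - x N := by rw [Nat.add_zero]
    have h9 : ∑ i ∈ Finset.range k, (u (N+i) - u N) =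
        (∑ i ∈ Finset.range k, u (N+i)) - (k:ℝ) • u N := by
      rw [Finset.sum_sub_distrib, Finset.sum_const, Finset.card_range,
        Nat.cast_smul_eq_nsmul ℝ]
    have hsumbound : ‖∑ i ∈ Finset.range k, (u (N+i) - u N)‖ ≤ (k:ℝ)*((k:ℝ)*θ) := by
      calc ‖∑ i ∈ Finset.range k, (u (N+i) - u N)‖
          ≤ ∑ i ∈ Finset.range k, ‖u (N+i) - u N‖ := norm_sum_le _ _
        _ ≤ ∑ _i ∈ Finset.range k, (k:ℝ)*θ := by
            apply Finset.sum_le_sum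
            intro i hi
            refine (hchain i).trans (mul_le_mul_of_nonneg_right ?_ hθpos.le)
            exact_mod_cast (Finset.mem_range.mp hi).le
        _ = (k:ℝ)*((k:ℝ)*θ) := by
            rw [Finset.sum_const, Finset.card_range, nsmul_eq_mul]
    have e2 : (k:ℝ) • u N = (x (N+k) - x N) - ∑ i ∈ Finset.range k, (u (N+i) - u N) := by
      rw [h9, htele]; abel
    have h7 : (k:ℝ)*L ≤ ‖(k:ℝ) • u N‖ := by
      rw [norm_smul, Real.norm_eq_abs, abs_of_nonneg hk0, hun]
      exact mul_le_mul_of_nonneg_left (hLle N) hk0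
    have h8 : ‖(k:ℝ) • u N‖ ≤ ‖x (N+k) - x N‖ + (k:ℝ)*((k:ℝ)*θ) := by
      rw [e2]
      exact (norm_sub_le _ _).trans (add_le_add_right hsumbound _)
    have hup : ‖x (N+k) - x N‖ ≤ M := hM _ (hxK _) _ (hxK N)
    linarith
  refine ⟨x, hxK, ?_⟩
  have hfun : (fun n => ‖x n - T (x n)‖) = D := funext fun n => by rw [← hsucc n]
  rw [hfun]
  exact hLz ▸ hL


lemma caseA_fix [CompleteSpace X] {K : Set X} (hKcl : IsClosed K)
    {γ μ : ℝ} (hμ0 : 0 ≤ μ) (hμ1 : μ ≤ 1/2) (hγ1 : γ ≤ 1) (hlt : 2*μ < γ)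
    {T : X → X} (hT : Set.MapsTo T K K)
    (hB : ∀ x ∈ K, ∀ y ∈ K, γ*‖x - T x‖ ≤ ‖x-y‖ + μ*‖y - T y‖ →
      ‖T x - T y‖ ≤ (1-γ)*‖x-y‖ + μ*(‖x - T y‖ + ‖y - T x‖))
    {x0 : X} (hx0 : x0 ∈ K) :
    ∃ z ∈ K, T z = z := by
  classical
  set x : ℕ → X := fun n => T^[n] x0 with hxdef
  have hxK : ∀ n, x n ∈ K := fun n => hT.iterate n hx0
  have hsucc : ∀ n, x (n+1) = T (x n) := fun n => Function.iterate_succ_apply' T n x0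
  set D : ℕ → ℝ := fun n => ‖x n - x (n+1)‖ with hDdef
  have hD0 : ∀ n, 0 ≤ D n := fun n => norm_nonneg _
  have h1μ : (0:ℝ) < 1 - μ := by linarith
  have hγ0 : 0 ≤ γ := by linarith
  set r : ℝ := (1-γ+μ)/(1-μ) with hrdef
  have hr0 : 0 ≤ r := by
    apply div_nonneg _ h1μ.le; linarith
  have hr1 : r < 1 := by
    rw [hrdef, div_lt_one h1μ]; linarith
  have key : ∀ n, D (n+1) ≤ (1-γ)*D n + μ*‖x n - x (n+2)‖ := by
    intro n
    have h := hB (x n) (hxK n) (x (n+1)) (hxK (n+1)) (by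
      rw [← hsucc n, ← hsucc (n+1)]
      have h1 : (0:ℝ) ≤ (1 - γ)*D n := mul_nonneg (by linarith) (hD0 n)
      have h2 : (0:ℝ) ≤ μ * D (n+1) := mul_nonneg hμ0 (hD0 (n+1))
      show γ*D n ≤ D n + μ * D (n+1)
      nlinarith [hD0 n])
    rw [← hsucc n, ← hsucc (n+1)] at h
    rw [sub_self, norm_zero, add_zero] at h
    show ‖x (n+1) - x (n+2)‖ ≤ _
    exact h
  have tri2 : ∀ n, ‖x n - x (n+2)‖ ≤ D n + D (n+1) := by
    intro n
    have e : x n - x (n+2) = (x n - x (n+1)) + (x (n+1) - x (n+2)) := by abel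
    rw [e]; exact norm_add_le _ _
  have hgeo : ∀ n, D (n+1) ≤ r * D n := by
    intro n
    have k1 := key n
    have k2 : μ*‖x n - x (n+2)‖ ≤ μ*(D n + D (n+1)) :=
      mul_le_mul_of_nonneg_left (tri2 n) hμ0
    rw [hrdef, div_mul_eq_mul_div, le_div_iff₀ h1μ]
    nlinarith
  have hpow : ∀ n, D n ≤ D 0 * r^n := by
    intro n
    induction n with
    | zero => simp
    | succ j ih =>
      calc D (j+1) ≤ r * D j := hgeo j
        _ ≤ r * (D 0 * r^j) := mul_le_mul_of_nonneg_left ih hr0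
        _ = D 0 * r^(j+1) := by ring
  have hcauchy : CauchySeq x :=
    cauchySeq_of_le_geometric r (D 0) hr1 (fun n => by
      rw [dist_eq_norm]; exact hpow n)
  obtain ⟨z, hz⟩ := cauchySeq_tendsto_of_complete hcauchy
  have hzK : z ∈ K := hKcl.mem_of_tendsto hz (Eventually.of_forall hxK)
  have hDto : Tendsto D atTop (𝓝 0) := by
    apply squeeze_zero hD0 hpow
    simpa using (tendsto_pow_atTop_nhds_zero_of_lt_one hr0 hr1).const_mul (D 0)
  by_cases hfix : ∃ n, x n = T (x n)
  · obtain ⟨n, hn⟩ := hfix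
    exact ⟨x n, hxK n, hn.symm⟩
  push_neg at hfix
  have hDpos : ∀ n, 0 < D n := by
    intro n
    rw [hDdef]
    simp only []
    rw [norm_pos_iff, sub_ne_zero, hsucc n]
    exact hfix n
  by_contra hne
  push_neg at hne
  have hTz : T z ≠ z := hne z hzK
  have hc : 0 < ‖z - T z‖ := norm_pos_iff.mpr (sub_ne_zero.mpr (Ne.symm hTz))
  -- the premise of condition B holds frequently between `x n` and `z`
  have hfreq : ∃ᶠ n in atTop, γ*D n ≤ ‖x n - z‖ + μ*‖z - T z‖ := by
    rcases hμ0.lt_or_eq with hμpos | hμz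
    · have h1 : Tendsto (fun n => γ*D n) atTop (𝓝 (γ*0)) := hDto.const_mul γ
      rw [mul_zero] at h1
      exact ((h1.eventually_lt_const (show (0:ℝ) < μ*‖z - T z‖ by positivity)).mono
        fun n hn => hn.le.trans (le_add_of_nonneg_left (norm_nonneg _))).frequently
    · rw [frequently_atTop]
      intro N
      by_contra hno
      push_neg at hno
      have h2 : ‖x N - z‖ + μ*‖z - T z‖ < γ*D N := hno N le_rfl
      have h3 : ‖x (N+1) - z‖ + μ*‖z - T z‖ < γ*D (N+1) := hno (N+1) (Nat.le_succ N)
      have h4 : D (N+1) ≤ r * D N := hgeo N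
      have hr' : r = 1 - γ := by rw [hrdef, ← hμz]; field_simp; ring
      have h1 : D N ≤ ‖x N - z‖ + ‖x (N+1) - z‖ := by
        have e : x N - x (N+1) = (x N - z) - (x (N+1) - z) := by abel
        calc D N = ‖(x N - z) - (x (N+1) - z)‖ := by rw [hDdef]; simp only []; rw [e]
          _ ≤ _ := norm_sub_le _ _
      rw [hr'] at h4
      rw [← hμz] at h2 h3
      nlinarith [mul_nonneg (sq_nonneg (1-γ)) (hDpos N).le,
        sq_nonneg (1-γ), (hDpos N), norm_nonneg (z - T z)]
  have hfreqF : ∃ᶠ n in atTop,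
      (0:ℝ) ≤ (1-γ)*‖x n - z‖ + μ*(‖x n - T z‖ + ‖z - x (n+1)‖) - ‖x (n+1) - T z‖ := by
    refine hfreq.mono fun n hn => ?_
    have h := hB (x n) (hxK n) z hzK (by rw [← hsucc n]; exact hn)
    rw [← hsucc n] at h
    linarith [h]
  have hxz1 : Tendsto (fun n => x (n+1)) atTop (𝓝 z) := hz.comp (tendsto_add_atTop_nat 1)
  have n1 : Tendsto (fun n => ‖x n - z‖) atTop (𝓝 0) := by
    simpa using (hz.sub (tendsto_const_nhds (x := z))).norm
  have n2 : Tendsto (fun n => ‖x n - T z‖) atTop (𝓝 ‖z - T z‖) :=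
    (hz.sub (tendsto_const_nhds (x := T z))).norm
  have n3 : Tendsto (fun n => ‖z - x (n+1)‖) atTop (𝓝 0) := by
    simpa using ((tendsto_const_nhds (x := z)).sub hxz1).norm
  have n4 : Tendsto (fun n => ‖x (n+1) - T z‖) atTop (𝓝 ‖z - T z‖) :=
    (hxz1.sub (tendsto_const_nhds (x := T z))).norm
  have hGlim : Tendsto
      (fun n => (1-γ)*‖x n - z‖ + μ*(‖x n - T z‖ + ‖z - x (n+1)‖) - ‖x (n+1) - T z‖)
      atTop (𝓝 ((1-γ)*0 + μ*(‖z - T z‖ + 0) - ‖z - T z‖)) :=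
    ((n1.const_mul (1-γ)).add ((n2.add n3).const_mul μ)).sub n4
  have hneg : (1-γ)*0 + μ*(‖z - T z‖ + 0) - ‖z - T z‖ < 0 := by nlinarith
  have hev : ∀ᶠ n in atTop,
      (1-γ)*‖x n - z‖ + μ*(‖x n - T z‖ + ‖z - x (n+1)‖) - ‖x (n+1) - T z‖ < 0 :=
    hGlim.eventually_lt_const hneg
  obtain ⟨n, h1, h2⟩ := (hfreqF.and_eventually hev).exists
  linarith


lemma afps_fix [UniformConvexSpace X] [CompleteSpace X] {K : Set X}
    (hKconv : Convex ℝ K) (hKw : IsCompact (toWeakSpace ℝ X '' K))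
    {γ μ : ℝ} (hμ0 : 0 ≤ μ) (hμ1 : μ ≤ 1/2) (hμγ : 2*μ ≤ γ)
    (hcase : 0 < μ ∨ γ = 0)
    {T : X → X} (hT : Set.MapsTo T K K)
    (hB : ∀ x ∈ K, ∀ y ∈ K, γ*‖x - T x‖ ≤ ‖x-y‖ + μ*‖y - T y‖ →
      ‖T x - T y‖ ≤ (1-γ)*‖x-y‖ + μ*(‖x - T y‖ + ‖y - T x‖))
    {x : ℕ → X} (hx : ∀ n, x n ∈ K)
    (hxT : Tendsto (fun n => ‖x n - T (x n)‖) atTop (𝓝 0)) :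
    ∃ z ∈ K, T z = z := by
  classical
  obtain ⟨M, hM0, hM⟩ := weakCompact_bounded hKw
  have hKcl : IsClosed K := weakCompact_isClosed hKw
  set 𝒰 : Ultrafilter ℕ := Ultrafilter.of atTop with h𝒰def
  have h𝒰 : (𝒰 : Filter ℕ) ≤ atTop := Ultrafilter.of_le _
  have hlim : ∀ u ∈ K, ∃ ℓ, Tendsto (fun n => ‖x n - u‖) (𝒰 : Filter ℕ) (𝓝 ℓ) := by
    intro u hu
    have hmem : ∀ n, ‖x n - u‖ ∈ Set.Icc (0:ℝ) M :=
      fun n => ⟨norm_nonneg _, hM _ (hx n) u hu⟩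
    obtain ⟨ℓ, -, hℓ⟩ := (isCompact_Icc (a := (0:ℝ)) (b := M)).ultrafilter_le_nhds
      (𝒰.map fun n => ‖x n - u‖)
      (by
        rw [Ultrafilter.coe_map]
        exact le_principal_iff.mpr (mem_map.mpr (Eventually.of_forall hmem)))
    rw [Ultrafilter.coe_map] at hℓ
    exact ⟨ℓ, hℓ⟩
  choose! φ hφ using hlim
  have hφ0 : ∀ u ∈ K, 0 ≤ φ u := fun u hu =>
    ge_of_tendsto (hφ u hu) (Eventually.of_forall fun n => norm_nonneg _)
  have hKne : K.Nonempty := ⟨x 0, hx 0⟩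
  have hbdd : BddBelow (φ '' K) := ⟨0, by rintro - ⟨u, hu, rfl⟩; exact hφ0 u hu⟩
  set r := sInf (φ '' K) with hrdef
  have hrle : ∀ u ∈ K, r ≤ φ u := fun u hu => csInf_le hbdd ⟨u, hu, rfl⟩
  have hr0 : 0 ≤ r := le_csInf (hKne.image φ) (by rintro - ⟨u, hu, rfl⟩; exact hφ0 u hu)
  -- convexity-type inequality for φ
  have hφ_combo : ∀ u ∈ K, ∀ v ∈ K, ∀ a b : ℝ, 0 ≤ a → 0 ≤ b → a + b = 1 →
      φ (a • u + b • v) ≤ a * φ u + b * φ v := by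
    intro u hu v hv a b ha hb hab
    have hmem : a • u + b • v ∈ K := hKconv hu hv ha hb hab
    refine le_of_tendsto_of_tendsto (hφ _ hmem)
      (((hφ u hu).const_mul a).add ((hφ v hv).const_mul b))
      (Eventually.of_forall fun n => ?_)
    have e : x n - (a • u + b • v) = a • (x n - u) + b • (x n - v) := by
      rw [show (a:ℝ) = 1 - b from by linarith]; module
    calc ‖x n - (a • u + b • v)‖ = ‖a • (x n - u) + b • (x n - v)‖ := by rw [e]
      _ ≤ ‖a • (x n - u)‖ + ‖b • (x n - v)‖ := norm_add_le _ _
      _ = a * ‖x n - u‖ + b * ‖x n - v‖ := by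
          rw [norm_smul, norm_smul, Real.norm_eq_abs, Real.norm_eq_abs,
            abs_of_nonneg ha, abs_of_nonneg hb]
  have hφ_lip : ∀ u ∈ K, ∀ v ∈ K, φ u ≤ φ v + ‖u - v‖ := by
    intro u hu v hv
    refine le_of_tendsto_of_tendsto (hφ u hu) ((hφ v hv).add_const ‖u - v‖)
      (Eventually.of_forall fun n => ?_)
    have e : x n - u = (x n - v) + (v - u) := by abel
    calc ‖x n - u‖ = ‖(x n - v) + (v - u)‖ := by rw [← e]
      _ ≤ ‖x n - v‖ + ‖v - u‖ := norm_add_le _ _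
      _ = ‖x n - v‖ + ‖u - v‖ := by rw [norm_sub_rev v u]
  set S : ℕ → Set X := fun k => {u ∈ K | φ u ≤ r + 1/((k:ℝ)+1)} with hSdef
  have hSne : ∀ k : ℕ, (S k).Nonempty := by
    intro k
    have hpos : 0 < 1/((k:ℝ)+1) := by positivity
    obtain ⟨-, ⟨u, hu, rfl⟩, hlt⟩ := exists_lt_of_csInf_lt (hKne.image φ)
      (show sInf (φ '' K) < r + 1/((k:ℝ)+1) by rw [← hrdef]; linarith)
    exact ⟨u, hu, hlt.le⟩
  have hScl : ∀ k, IsClosed (S k) := by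
    intro k
    apply IsSeqClosed.isClosed
    intro u p hu hup
    have hpK : p ∈ K := hKcl.mem_of_tendsto hup (Eventually.of_forall fun j => (hu j).1)
    refine ⟨hpK, ?_⟩
    have h1 : ∀ j, φ p ≤ r + 1/((k:ℝ)+1) + ‖p - u j‖ := fun j =>
      (hφ_lip p hpK (u j) (hu j).1).trans (by linarith [(hu j).2])
    have h3 : Tendsto (fun j => ‖p - u j‖) atTop (𝓝 0) := by
      simpa using ((tendsto_const_nhds (x := p)).sub hup).norm
    have h2 : Tendsto (fun j => r + 1/((k:ℝ)+1) + ‖p - u j‖) atTop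
        (𝓝 (r + 1/((k:ℝ)+1))) := by
      simpa using (tendsto_const_nhds (x := r + 1/((k:ℝ)+1))).add h3
    exact ge_of_tendsto h2 (Eventually.of_forall h1)
  have hSsub : ∀ k, S k ⊆ K := fun k u hu => hu.1
  have hSconv : ∀ k, Convex ℝ (S k) := by
    intro k z₁ hz₁ z₂ hz₂ a b ha hb hab
    refine ⟨hKconv hz₁.1 hz₂.1 ha hb hab, ?_⟩
    calc φ _ ≤ a * φ z₁ + b * φ z₂ := hφ_combo _ hz₁.1 _ hz₂.1 a b ha hb hab
      _ ≤ a * (r + 1/((k:ℝ)+1)) + b * (r + 1/((k:ℝ)+1)) :=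
          add_le_add (mul_le_mul_of_nonneg_left hz₁.2 ha)
            (mul_le_mul_of_nonneg_left hz₂.2 hb)
      _ = r + 1/((k:ℝ)+1) := by rw [← add_mul, hab, one_mul]
  set A : ℕ → Set (WeakSpace ℝ X) := fun k => toWeakSpace ℝ X '' S k with hAdef
  have hAcomp : IsCompact (A 0) := weakCompact_subset hKw (hSsub 0) (hSconv 0) (hScl 0)
  have hAcl : ∀ k, IsClosed (A k) := fun k => convex_isClosed_image_weak (hSconv k) (hScl k)
  have hAne : ∀ k, (A k).Nonempty := fun k => (hSne k).image _
  have hAanti : ∀ k, A (k+1) ⊆ A k := by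
    intro k
    apply Set.image_mono
    intro u hu
    refine ⟨hu.1, hu.2.trans ?_⟩
    have h4 : 1/(((k:ℕ)+1:ℕ):ℝ)+1 = 0 ∨ True := Or.inr trivial
    have h5 : 1/((((k+1):ℕ)):ℝ)+1 = 1/((((k+1):ℕ)):ℝ)+1 := rfl
    have : 1/(((k+1):ℕ):ℝ) ≥ 0 := by positivity
    gcongr
    · push_cast; linarith
  obtain ⟨y, hy⟩ := IsCompact.nonempty_iInter_of_sequence_nonempty_isCompact_isClosed
    A hAanti hAne hAcomp hAcl
  obtain ⟨z, hzS0, hzeq⟩ := (Set.mem_iInter.mp hy) 0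
  have hzSk : ∀ k, z ∈ S k := by
    intro k
    obtain ⟨w, hwS, hweq⟩ := (Set.mem_iInter.mp hy) k
    have : w = z := (toWeakSpace ℝ X).injective (by rw [hweq, hzeq])
    rwa [this] at hwS
  have hzK : z ∈ K := hzS0.1
  have hφz : φ z = r := by
    apply le_antisymm ?_ (hrle z hzK)
    have hto : Tendsto (fun k : ℕ => r + 1/((k:ℝ)+1)) atTop (𝓝 r) := by
      simpa using (tendsto_const_nhds (x := r)).add tendsto_one_div_add_atTop_nhds_zero_nat
    exact ge_of_tendsto hto (Eventually.of_forall fun k => (hzSk k).2)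
  refine ⟨z, hzK, ?_⟩
  by_contra hne
  have hTzK : T z ∈ K := hT hzK
  have hcpos : 0 < ‖z - T z‖ := norm_pos_iff.mpr (sub_ne_zero.mpr (Ne.symm hne))
  set c := ‖z - T z‖ with hcdef
  have h1μ : (0:ℝ) < 1 - μ := by linarith
  -- the condition-B premise holds eventually
  have hprem : ∀ᶠ n in (𝒰 : Filter ℕ), γ*‖x n - T (x n)‖ ≤ ‖x n - z‖ + μ*c := by
    rcases hcase with hμpos | hγ0
    · have h1 : Tendsto (fun n => γ*‖x n - T (x n)‖) atTop (𝓝 (γ*0)) := hxT.const_mul γ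
      rw [mul_zero] at h1
      have h2 : ∀ᶠ n in atTop, γ*‖x n - T (x n)‖ < μ*c :=
        h1.eventually_lt_const (by positivity)
      exact (h2.filter_mono h𝒰).mono fun n hn =>
        hn.le.trans (le_add_of_nonneg_left (norm_nonneg _))
    · refine Eventually.of_forall fun n => ?_
      rw [hγ0, zero_mul]
      have : 0 ≤ μ*c := by positivity
      positivity
  have hconc : ∀ᶠ n in (𝒰 : Filter ℕ),
      ‖x n - T z‖ ≤ ‖x n - z‖ + ((1+μ)/(1-μ))*‖x n - T (x n)‖ := by
    refine hprem.mono fun n hn => ?_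
    have h := hB (x n) (hx n) z hzK hn
    have t1 : ‖x n - T z‖ ≤ ‖x n - T (x n)‖ + ‖T (x n) - T z‖ := by
      have e : x n - T z = (x n - T (x n)) + (T (x n) - T z) := by abel
      rw [e]; exact norm_add_le _ _
    have t2 : ‖z - T (x n)‖ ≤ ‖x n - z‖ + ‖x n - T (x n)‖ := by
      have e : z - T (x n) = -(x n - z) + (x n - T (x n)) := by abel
      rw [e]
      exact (norm_add_le _ _).trans_eq (by rw [norm_neg])
    have hB0 : (0:ℝ) ≤ ‖x n - z‖ := norm_nonneg _
    have key : (1-μ)*‖x n - T z‖ ≤ (1-μ)*‖x n - z‖ + (1+μ)*‖x n - T (x n)‖ := by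
      nlinarith [mul_nonneg (show (0:ℝ) ≤ γ - 2*μ by linarith) hB0]
    have final : ‖x n - T z‖ - ‖x n - z‖ ≤ ((1+μ)*‖x n - T (x n)‖)/(1-μ) := by
      rw [le_div_iff₀ h1μ]; nlinarith [key]
    rw [div_mul_eq_mul_div]
    linarith [final]
  have hφTz : φ (T z) = r := by
    refine le_antisymm ?_ (hrle _ hTzK)
    have htor : Tendsto (fun n => ‖x n - z‖ + ((1+μ)/(1-μ))*‖x n - T (x n)‖)
        (𝒰 : Filter ℕ) (𝓝 (φ z + ((1+μ)/(1-μ))*0)) :=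
      (hφ z hzK).add ((hxT.mono_left h𝒰).const_mul _)
    rw [mul_zero, add_zero, hφz] at htor
    exact le_of_tendsto_of_tendsto (hφ _ hTzK) htor hconc
  have hrpos : 0 < r := by
    rcases hr0.lt_or_eq with h | h
    · exact h
    · exfalso
      have hz0 : Tendsto (fun n => ‖x n - z‖) (𝒰 : Filter ℕ) (𝓝 0) := by
        have := hφ z hzK; rwa [hφz, ← h] at this
      have hTz0 : Tendsto (fun n => ‖x n - T z‖) (𝒰 : Filter ℕ) (𝓝 0) := by
        have := hφ _ hTzK; rwa [hφTz, ← h] at this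
      have hcle : ∀ n, c ≤ ‖x n - z‖ + ‖x n - T z‖ := by
        intro n
        have e : z - T z = -(x n - z) + (x n - T z) := by abel
        calc c = ‖-(x n - z) + (x n - T z)‖ := by rw [hcdef, ← e]
          _ ≤ ‖-(x n - z)‖ + ‖x n - T z‖ := norm_add_le _ _
          _ = ‖x n - z‖ + ‖x n - T z‖ := by rw [norm_neg]
      have hlim0 : Tendsto (fun n => ‖x n - z‖ + ‖x n - T z‖) (𝒰 : Filter ℕ) (𝓝 0) := by
        simpa using hz0.add hTz0
      have := ge_of_tendsto hlim0 (Eventually.of_forall hcle)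
      linarith
  -- uniform convexity contradiction
  obtain ⟨δ, hδ, hUC⟩ := exists_forall_closed_ball_dist_add_le_two_sub X
    (show 0 < c/(r+1) by positivity)
  set η := min 1 (r*δ/4) with hηdef
  have hηpos : 0 < η := lt_min one_pos (by positivity)
  have hη1 : η ≤ 1 := min_le_left _ _
  have hη4 : η ≤ r*δ/4 := min_le_right _ _
  set R := r + η with hRdef
  have hRpos : 0 < R := by simp only [hRdef]; linarith
  have hRr1 : R ≤ r + 1 := by simp only [hRdef]; linarith
  set mpt := (1/2 : ℝ) • z + (1/2 : ℝ) • (T z) with hmdef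
  have hmK : mpt ∈ K := hKconv hzK hTzK (by norm_num) (by norm_num) (by norm_num)
  have hev1 : ∀ᶠ n in (𝒰 : Filter ℕ), ‖x n - z‖ ≤ R := by
    have := (hφ z hzK)
    rw [hφz] at this
    exact (this.eventually_lt_const (show r < R by simp only [hRdef]; linarith)).mono
      fun n hn => hn.le
  have hev2 : ∀ᶠ n in (𝒰 : Filter ℕ), ‖x n - T z‖ ≤ R := by
    have := (hφ _ hTzK)
    rw [hφTz] at this
    exact (this.eventually_lt_const (show r < R by simp only [hRdef]; linarith)).mono
      fun n hn => hn.le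
  have hevm : ∀ᶠ n in (𝒰 : Filter ℕ), ‖x n - mpt‖ ≤ R*(1 - δ/2) := by
    filter_upwards [hev1, hev2] with n h1 h2
    have hinv : (0:ℝ) < R⁻¹ := inv_pos.mpr hRpos
    have hu1 : ‖R⁻¹ • (x n - z)‖ ≤ 1 := by
      rw [norm_smul, Real.norm_eq_abs, abs_of_pos hinv]
      calc R⁻¹ * ‖x n - z‖ ≤ R⁻¹ * R := by
            exact mul_le_mul_of_nonneg_left h1 hinv.le
        _ = 1 := inv_mul_cancel₀ (ne_of_gt hRpos)
    have hu2 : ‖R⁻¹ • (x n - T z)‖ ≤ 1 := by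
      rw [norm_smul, Real.norm_eq_abs, abs_of_pos hinv]
      calc R⁻¹ * ‖x n - T z‖ ≤ R⁻¹ * R := by
            exact mul_le_mul_of_nonneg_left h2 hinv.le
        _ = 1 := inv_mul_cancel₀ (ne_of_gt hRpos)
    have hdist : c/(r+1) ≤ ‖R⁻¹ • (x n - z) - R⁻¹ • (x n - T z)‖ := by
      rw [← smul_sub, show (x n - z) - (x n - T z) = -(z - T z) by abel,
        smul_neg, norm_neg, norm_smul, Real.norm_eq_abs, abs_of_pos hinv,
        inv_mul_eq_div]
      exact div_le_div_of_nonneg_left hcpos.le hRpos hRr1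
    have h3 := hUC hu1 hu2 hdist
    have e : R⁻¹ • (x n - z) + R⁻¹ • (x n - T z) = R⁻¹ • ((2:ℝ) • (x n - mpt)) := by
      rw [← smul_add]
      congr 1
      rw [hmdef]; module
    rw [e, norm_smul, norm_smul, Real.norm_eq_abs, Real.norm_eq_abs,
      abs_of_pos hinv, abs_of_pos (show (0:ℝ) < 2 by norm_num)] at h3
    -- h3 : R⁻¹ * (2 * ‖x n - mpt‖) ≤ 2 - δ
    have h4 : 2 * ‖x n - mpt‖ ≤ R * (2 - δ) := by
      have := mul_le_mul_of_nonneg_left h3 hRpos.le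
      rwa [← mul_assoc, mul_inv_cancel₀ (ne_of_gt hRpos), one_mul] at this
    nlinarith [h4]
  have hφm : φ mpt ≤ R*(1-δ/2) := le_of_tendsto (hφ mpt hmK) hevm
  have hrm : r ≤ φ mpt := hrle _ hmK
  have hcon : r ≤ (r+η)*(1-δ/2) := by
    calc r ≤ φ mpt := hrm
      _ ≤ R*(1-δ/2) := hφm
      _ = (r+η)*(1-δ/2) := by rw [hRdef]
  nlinarith [mul_pos hrpos hδ, mul_pos hηpos hδ]


lemma single_fix [UniformConvexSpace X] [CompleteSpace X] {K : Set X}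
    (hKne : K.Nonempty) (hKconv : Convex ℝ K) (hKw : IsCompact (toWeakSpace ℝ X '' K))
    {γ μ : ℝ} (hγ0 : 0 ≤ γ) (hγ1 : γ ≤ 1) (hμ0 : 0 ≤ μ) (hμ1 : μ ≤ 1/2) (hμγ : 2*μ ≤ γ)
    {T : X → X} (hT : Set.MapsTo T K K)
    (hB : ∀ x ∈ K, ∀ y ∈ K, γ*‖x - T x‖ ≤ ‖x-y‖ + μ*‖y - T y‖ →
      ‖T x - T y‖ ≤ (1-γ)*‖x-y‖ + μ*(‖x - T y‖ + ‖y - T x‖)) :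
    ∃ z ∈ K, T z = z := by
  obtain ⟨x0, hx0⟩ := hKne
  obtain ⟨M, hM0, hM⟩ := weakCompact_bounded hKw
  have hKcl : IsClosed K := weakCompact_isClosed hKw
  rcases eq_or_lt_of_le hμγ with heq | hlt
  · rcases hμ0.lt_or_eq with hμpos | hμz
    · -- γ = 2μ, μ > 0 : orbit afps + asymptotic center
      have hB2 : ∀ x ∈ K, ∀ y ∈ K, (2*μ)*‖x - T x‖ ≤ ‖x-y‖ + μ*‖y - T y‖ →
          ‖T x - T y‖ ≤ (1-2*μ)*‖x-y‖ + μ*(‖x - T y‖ + ‖y - T x‖) := by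
        intro x hx y hy hp
        rw [heq] at hp ⊢
        exact hB x hx y hy hp
      obtain ⟨xs, hxs, hxsT⟩ := orbit_afps hM0 hM hμpos hμ1 hT hB2 hx0
      exact afps_fix hKconv hKw hμ0 hμ1 hμγ (Or.inl hμpos) hT hB hxs hxsT
    · -- μ = 0, γ = 0 : nonexpansive, contraction afps + asymptotic center
      have hγz : γ = 0 := by rw [← heq, ← hμz]; ring
      have hnon : ∀ p ∈ K, ∀ q ∈ K, ‖T p - T q‖ ≤ ‖p - q‖ := by
        intro p hp q hq
        have h := hB p hp q hq (by
          rw [hγz, zero_mul]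
          positivity)
        rw [hγz, ← hμz] at h
        simpa using h
      have hafp : ∀ ε : ℝ, 0 < ε → ∃ x ∈ K, ‖x - T x‖ ≤ ε := fun ε hε =>
        nonexpansive_afps hKconv hKcl ⟨x0, hx0⟩ hM0 hM hT hnon hε
      choose y hyK hyT using fun n : ℕ => hafp (1/((n:ℝ)+1)) (by positivity)
      have hto : Tendsto (fun n => ‖y n - T (y n)‖) atTop (𝓝 0) :=
        squeeze_zero (fun n => norm_nonneg _) hyT tendsto_one_div_add_atTop_nhds_zero_nat
      exact afps_fix hKconv hKw hμ0 hμ1 hμγ (Or.inr hγz) hT hB hyK hto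
  · exact caseA_fix hKcl hμ0 hμ1 hγ1 hlt hT hB hx0

end CondBHelpers

/-- For a finite family `T 1, …, T m` of pairwise commuting self-maps of a
nonempty convex weakly compact subset of a uniformly convex Banach space,
each satisfying condition `B_{γ,μ}`, the fixed point sets
`F(T i) = {x ∈ C | T i x = x}` have nonempty intersection. -/
theorem condB_fixed_point_sets_inter_nonempty
    {X : Type*} [NormedAddCommGroup X] [NormedSpace ℝ X] [CompleteSpace X]
    [UniformConvexSpace X]
    (C : Set X) (hC : C.Nonempty) (hconv : Convex ℝ C)
    (hwcomp : IsCompact (toWeakSpace ℝ X '' C))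
    (m : ℕ) (hm : 1 ≤ m)
    (γ μ : ℝ) (hγ : γ ∈ Set.Icc (0 : ℝ) 1) (hμ : μ ∈ Set.Icc (0 : ℝ) (1 / 2))
    (hμγ : 2 * μ ≤ γ)
    (T : ℕ → X → X)
    (hmaps : ∀ i, 1 ≤ i → i ≤ m → Set.MapsTo (T i) C C)
    (hcomm : ∀ i j, 1 ≤ i → i ≤ m → 1 ≤ j → j ≤ m →
      ∀ x ∈ C, T i (T j x) = T j (T i x))
    (hB : ∀ i, 1 ≤ i → i ≤ m → ∀ x ∈ C, ∀ y ∈ C,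
      γ * ‖x - T i x‖ ≤ ‖x - y‖ + μ * ‖y - T i y‖ →
        ‖T i x - T i y‖ ≤ (1 - γ) * ‖x - y‖
          + μ * (‖x - T i y‖ + ‖y - T i x‖)) :
    (⋂ i ∈ Finset.Icc 1 m, {x ∈ C | T i x = x}).Nonempty := by
  obtain ⟨hγ0, hγ1⟩ := hγ
  obtain ⟨hμ0, hμ1⟩ := hμ
  set P : ℕ → Set X := fun k => {x ∈ C | ∀ i, 1 ≤ i → i ≤ k → T i x = x} with hPdef
  have main : ∀ k, k ≤ m → (P k).Nonempty ∧ Convex ℝ (P k) ∧ IsClosed (P k) ∧ P k ⊆ C := by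
    intro k
    induction k with
    | zero =>
      intro _
      have hP0 : P 0 = C := by
        ext p
        simp only [hPdef, Set.mem_setOf_eq, Set.mem_sep_iff]
        exact ⟨fun h => h.1, fun h => ⟨h, fun i h1 h2 => by omega⟩⟩
      rw [hP0]
      exact ⟨hC, hconv, weakCompact_isClosed hwcomp, le_rfl⟩
    | succ k ih =>
      intro hk
      obtain ⟨hne, hcv, hcl, hsub⟩ := ih (by omega)
      have hw : IsCompact (toWeakSpace ℝ X '' P k) := weakCompact_subset hwcomp hsub hcv hcl
      have h1k : 1 ≤ k+1 := by omega
      have hmaps' : Set.MapsTo (T (k+1)) (P k) (P k) := by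
        intro p hp
        have hpC : p ∈ C := hp.1
        have hTC : T (k+1) p ∈ C := hmaps (k+1) h1k hk hpC
        refine ⟨hTC, fun i hi1 hik => ?_⟩
        rw [hcomm i (k+1) hi1 (by omega) h1k hk p hpC, hp.2 i hi1 hik]
      have hB' : ∀ x ∈ P k, ∀ y ∈ P k, γ*‖x - T (k+1) x‖ ≤ ‖x-y‖ + μ*‖y - T (k+1) y‖ →
          ‖T (k+1) x - T (k+1) y‖ ≤ (1-γ)*‖x-y‖ + μ*(‖x - T (k+1) y‖ + ‖y - T (k+1) x‖) :=
        fun x hx y hy h => hB (k+1) h1k hk x hx.1 y hy.1 h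
      obtain ⟨z, hzP, hzfix⟩ := single_fix hne hcv hw hγ0 hγ1 hμ0 hμ1 hμγ hmaps' hB'
      have hPsucc : P (k+1) = {x ∈ P k | T (k+1) x = x} := by
        ext p
        constructor
        · rintro ⟨hpC, hfix⟩
          exact ⟨⟨hpC, fun i h1 h2 => hfix i h1 (by omega)⟩, hfix (k+1) h1k le_rfl⟩
        · rintro ⟨⟨hpC, hfix⟩, hfix2⟩
          refine ⟨hpC, fun i h1 h2 => ?_⟩
          rcases Nat.lt_or_ge i (k+1) with h | h
          · exact hfix i h1 (by omega)
          · have : i = k+1 := by omega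
            rw [this]
            exact hfix2
      refine ⟨⟨z, ?_⟩, ?_, ?_, ?_⟩
      · rw [hPsucc]; exact ⟨hzP, hzfix⟩
      · rw [hPsucc]; exact condB_fix_convex hcv hμ0 hμ1 hμγ hB'
      · rw [hPsucc]; exact condB_fix_closed hcl hμ0 hμ1 hμγ hB'
      · rw [hPsucc]; intro p hp; exact hp.1.1
  obtain ⟨⟨z, hzC, hz⟩, -, -, -⟩ := main m le_rfl
  refine ⟨z, ?_⟩
  simp only [Set.mem_iInter, Finset.mem_Icc]
  intro i hi
  exact ⟨hzC, hz i hi.1 hi.2⟩
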